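/- Let M be an n × n Hermitian complex matrix such that M_{ii} ≥ L for every i ∈ [n], where L > 0 is a positive real number. Then rank(M) ≥ n²L² / (nL² + Σ_{i≠j} |M_{ij}|²). -/

import Mathlib

open Matrix Finset

lemma trace_sq_le_rank_mul_frob {m : ℕ} (A : Matrix (Fin m) (Fin m) ℂ) (hA : A.IsHermitian) :
    (A.trace.re) ^ 2 ≤ (A.rank : ℝ) * ∑ i, ∑ j, ‖A i j‖ ^ 2 := by
  classical
  set μ := hA.eigenvalues with hμ
  set U : Matrix (Fin m) (Fin m) ℂ := (hA.eigenvectorUnitary : Matrix (Fin m) (Fin m) ℂ) with hUdef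
  set D : Matrix (Fin m) (Fin m) ℂ := diagonal (RCLike.ofReal ∘ μ) with hDdef
  have hU : A = U * D * star U := hA.spectral_theorem
  have hU2 : star U * U = 1 := Matrix.mem_unitaryGroup_iff'.mp hA.eigenvectorUnitary.2
  have hU2' : ∀ B : Matrix (Fin m) (Fin m) ℂ, star U * (U * B) = B := by
    intro B; rw [← Matrix.mul_assoc, hU2, Matrix.one_mul]
  -- trace A = Σ μ
  have htr : A.trace = ∑ i, (μ i : ℂ) := by
    conv_lhs => rw [hU]
    rw [Matrix.trace_mul_cycle, hU2, Matrix.one_mul, hDdef, Matrix.trace_diagonal]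
    rfl
  -- trace (A*A) = Σ μ²
  have hAA : A * A = U * (D * D) * star U := by
    conv_lhs => rw [hU]
    simp only [Matrix.mul_assoc, hU2']
  have htr2 : (A * A).trace = ∑ i, ((μ i : ℂ)) ^ 2 := by
    rw [hAA, Matrix.trace_mul_cycle, ← Matrix.mul_assoc, hU2, Matrix.one_mul, hDdef,
      diagonal_mul_diagonal, Matrix.trace_diagonal]
    simp [sq]
  -- frobenius = trace(A*A).re
  have hfrob : ∑ i, ∑ j, ‖A i j‖ ^ 2 = ((A * A).trace).re := by
    rw [Matrix.trace, Complex.re_sum]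
    apply Finset.sum_congr rfl
    intro i _
    rw [Matrix.diag_apply, Matrix.mul_apply, Complex.re_sum]
    apply Finset.sum_congr rfl
    intro j _
    have h : A j i = (starRingEnd ℂ) (A i j) := by
      conv_lhs => rw [← hA.eq]
      simp [Matrix.conjTranspose_apply]
    rw [h, Complex.mul_conj, Complex.ofReal_re, Complex.sq_norm]
  have hfrob2 : ∑ i, ∑ j, ‖A i j‖ ^ 2 = ∑ i, μ i ^ 2 := by
    rw [hfrob, htr2, Complex.re_sum]
    simp [← Complex.ofReal_pow]
  have htrre : A.trace.re = ∑ i, μ i := by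
    rw [htr, Complex.re_sum]; simp
  -- Cauchy-Schwarz
  set s := univ.filter (fun i => μ i ≠ 0) with hs
  have hrank : (A.rank : ℝ) = (s.card : ℝ) := by
    rw [hA.rank_eq_card_non_zero_eigs]
    norm_cast
    simp [hs, Fintype.card_subtype, hμ]
  have h1 : ∑ i, μ i = ∑ i ∈ s, μ i := by
    rw [hs, Finset.sum_filter_ne_zero]
  have hcs : (∑ i ∈ s, μ i) ^ 2 ≤ (s.card : ℝ) * ∑ i ∈ s, μ i ^ 2 := by
    exact_mod_cast sq_sum_le_card_mul_sum_sq (s := s) (f := μ)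
  have h2 : ∑ i ∈ s, μ i ^ 2 ≤ ∑ i, μ i ^ 2 :=
    Finset.sum_le_sum_of_subset_of_nonneg (Finset.filter_subset _ _)
      (fun i _ _ => sq_nonneg _)
  rw [htrre, hfrob2, hrank, h1]
  calc (∑ i ∈ s, μ i) ^ 2 ≤ (s.card : ℝ) * ∑ i ∈ s, μ i ^ 2 := hcs
    _ ≤ (s.card : ℝ) * ∑ i, μ i ^ 2 :=
      mul_le_mul_of_nonneg_left h2 (Nat.cast_nonneg _)

theorem rank_of_diagonal_dominant {n : ℕ} (M : Matrix (Fin n) (Fin n) ℂ)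
    (hM : M.IsHermitian) (L : ℝ) (hL : 0 < L) (hdiag : ∀ i : Fin n, L ≤ (M i i).re) :
    (n : ℝ) ^ 2 * L ^ 2 /
        ((n : ℝ) * L ^ 2 +
          ∑ p ∈ Finset.univ.filter (fun p : Fin n × Fin n => p.1 ≠ p.2),
            ‖M p.1 p.2‖ ^ 2) ≤ (M.rank : ℝ) := by
  classical
  set S : ℝ := ∑ p ∈ Finset.univ.filter (fun p : Fin n × Fin n => p.1 ≠ p.2),
      ‖M p.1 p.2‖ ^ 2 with hS
  have hSnonneg : 0 ≤ S := Finset.sum_nonneg fun p _ => by positivity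
  rcases Nat.eq_zero_or_pos n with hn | hn
  · subst hn
    simp
  -- setup
  set d : Fin n → ℝ := fun i => (M i i).re with hd
  have hdpos : ∀ i, 0 < d i := fun i => lt_of_lt_of_le hL (hdiag i)
  set c : Fin n → ℝ := fun i => (Real.sqrt (d i))⁻¹ with hc
  have hcpos : ∀ i, 0 < c i := fun i => by
    have := Real.sqrt_pos.mpr (hdpos i); positivity
  set D : Matrix (Fin n) (Fin n) ℂ := Matrix.diagonal (fun i => (c i : ℂ)) with hD
  set N : Matrix (Fin n) (Fin n) ℂ := D * M * D with hN
  have hNapp : ∀ i j, N i j = (c i : ℂ) * M i j * (c j : ℂ) := by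
    intro i j
    rw [hN, Matrix.mul_diagonal, Matrix.diagonal_mul]
  have hMdiag : ∀ i, M i i = ((d i : ℝ) : ℂ) := by
    intro i
    have h := congrFun (congrFun hM.eq i) i
    rw [Matrix.conjTranspose_apply] at h
    exact (Complex.conj_eq_iff_re.mp h).symm
  have hcdc : ∀ i, c i * d i * c i = 1 := by
    intro i
    have hs : Real.sqrt (d i) * Real.sqrt (d i) = d i := Real.mul_self_sqrt (hdpos i).le
    have hsne : Real.sqrt (d i) ≠ 0 := (Real.sqrt_pos.mpr (hdpos i)).ne'
    have h2 : c i * d i * c i = d i / (Real.sqrt (d i) * Real.sqrt (d i)) := by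
      rw [hc]; ring
    rw [h2, hs, div_self (hdpos i).ne']
  have hNdiag : ∀ i, N i i = 1 := by
    intro i
    rw [hNapp, hMdiag]
    exact_mod_cast congrArg (Complex.ofReal) (hcdc i)
  -- N is Hermitian
  have hDH : Dᴴ = D := by
    rw [hD, Matrix.diagonal_conjTranspose]
    apply congrArg
    funext i
    exact Complex.conj_ofReal _
  have hNH : N.IsHermitian := by
    rw [Matrix.IsHermitian, hN, Matrix.conjTranspose_mul, Matrix.conjTranspose_mul, hDH, hM.eq,
      Matrix.mul_assoc]
  -- rank N = rank M
  have hDdet : IsUnit D.det := by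
    rw [hD, Matrix.det_diagonal]
    simp only [isUnit_iff_ne_zero]
    apply Finset.prod_ne_zero_iff.mpr
    intro i _
    exact_mod_cast Complex.ofReal_ne_zero.mpr (hcpos i).ne'
  have hrank : N.rank = M.rank := by
    rw [hN, Matrix.rank_mul_eq_left_of_isUnit_det _ _ hDdet,
      Matrix.rank_mul_eq_right_of_isUnit_det _ _ hDdet]
  -- trace of N
  have htrN : N.trace.re = (n : ℝ) := by
    rw [Matrix.trace]
    rw [Complex.re_sum]
    rw [Finset.sum_congr rfl (fun i _ => by rw [Matrix.diag_apply, hNdiag i])]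
    simp
  -- Frobenius norm of N split
  have hsplit : ∑ i, ∑ j, ‖N i j‖ ^ 2 =
      (n : ℝ) + ∑ p ∈ Finset.univ.filter (fun p : Fin n × Fin n => p.1 ≠ p.2),
        ‖N p.1 p.2‖ ^ 2 := by
    rw [← Finset.sum_product']
    rw [show (Finset.univ ×ˢ Finset.univ : Finset (Fin n × Fin n)) = Finset.univ from
      Finset.univ_product_univ]
    rw [← Finset.sum_filter_add_sum_filter_not Finset.univ (fun p : Fin n × Fin n => p.1 = p.2)]
    congr 1
    rw [Finset.sum_filter]
    rw [Fintype.sum_prod_type]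
    simp [hNdiag]
  set T : ℝ := ∑ p ∈ Finset.univ.filter (fun p : Fin n × Fin n => p.1 ≠ p.2),
      ‖N p.1 p.2‖ ^ 2 with hT
  have hci : ∀ i, c i ^ 2 * d i = 1 := by
    intro i
    calc c i ^ 2 * d i = c i * d i * c i := by ring
      _ = 1 := hcdc i
  have hoff : ∀ p : Fin n × Fin n,
      ‖N p.1 p.2‖ ^ 2 * L ^ 2 ≤ ‖M p.1 p.2‖ ^ 2 := by
    intro p
    rw [hNapp, norm_mul, norm_mul, Complex.norm_real, Complex.norm_real, Real.norm_eq_abs, Real.norm_eq_abs,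
      abs_of_pos (hcpos p.1), abs_of_pos (hcpos p.2)]
    have h1 : L ≤ d p.1 := hdiag p.1
    have h2 : L ≤ d p.2 := hdiag p.2
    have hd1 := hdpos p.1
    have hd2 := hdpos p.2
    have e1 := hci p.1
    have e2 := hci p.2
    have hLsq : L ^ 2 ≤ d p.1 * d p.2 := by nlinarith
    have hA : 0 ≤ c p.1 ^ 2 * c p.2 ^ 2 := by positivity
    have hprod : c p.1 ^ 2 * c p.2 ^ 2 * (d p.1 * d p.2) = 1 := by
      rw [show c p.1 ^ 2 * c p.2 ^ 2 * (d p.1 * d p.2)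
          = (c p.1 ^ 2 * d p.1) * (c p.2 ^ 2 * d p.2) from by ring, e1, e2, one_mul]
    have hB : c p.1 ^ 2 * c p.2 ^ 2 * L ^ 2 ≤ 1 := by
      calc c p.1 ^ 2 * c p.2 ^ 2 * L ^ 2 ≤ c p.1 ^ 2 * c p.2 ^ 2 * (d p.1 * d p.2) :=
            mul_le_mul_of_nonneg_left hLsq hA
        _ = 1 := hprod
    set a : ℝ := ‖M p.1 p.2‖ with ha
    calc (c p.1 * a * c p.2) ^ 2 * L ^ 2 = a ^ 2 * (c p.1 ^ 2 * c p.2 ^ 2 * L ^ 2) := by ring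
      _ ≤ a ^ 2 * 1 := mul_le_mul_of_nonneg_left hB (sq_nonneg a)
      _ = a ^ 2 := mul_one _
  have hoffsum : T * L ^ 2 ≤ S := by
    rw [hT, hS, Finset.sum_mul]
    exact Finset.sum_le_sum fun p _ => hoff p
  have hTnonneg : 0 ≤ T := Finset.sum_nonneg fun p _ => by positivity
  have hkey := trace_sq_le_rank_mul_frob N hNH
  rw [htrN, hrank, hsplit] at hkey
  have hn' : (0:ℝ) < (n : ℝ) := by exact_mod_cast hn
  have hden : 0 < (n : ℝ) * L ^ 2 + S :=
    add_pos_of_pos_of_nonneg (by positivity) hSnonneg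
  rw [div_le_iff₀ hden]
  have hrk : (0:ℝ) ≤ (M.rank : ℝ) := Nat.cast_nonneg _
  calc (n:ℝ) ^ 2 * L ^ 2 ≤ ((M.rank : ℝ) * ((n:ℝ) + T)) * L ^ 2 :=
        mul_le_mul_of_nonneg_right hkey (sq_nonneg L)
    _ = (M.rank : ℝ) * ((n:ℝ) * L ^ 2 + T * L ^ 2) := by ring
    _ ≤ (M.rank : ℝ) * ((n:ℝ) * L ^ 2 + S) :=
        mul_le_mul_of_nonneg_left (add_le_add_right hoffsum _) hrk
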